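/- Let h be a positive integer, let n_1,…,n_h be positive integers, and for each i ∈ {1,…,h} and j ∈ {0,…,n_i} let val(i;j) ∈ ℝ. Let θ := max{n_i : i = 1,…,h}, let s ∈ {0,…,Σ n_i − 1}, and let j^s be an optimal solution for val(s). Then there exists an optimal solution j^{s+1} for val(s+1) with Σ_{i=1}^h |j^{s+1}_i − j^s_i| ≤ (θ−1)θ(θ+1) + 1. -/

import Mathlib

/-- `j` is a feasible solution for `val(σ)`: `j_i ∈ {0,…,n_i}` and `∑ j_i = σ`. -/
def IsFeasible {h : ℕ} (n : Fin h → ℕ) (σ : ℕ) (j : Fin h → ℕ) : Prop :=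
  (∀ i, j i ≤ n i) ∧ (∑ i, j i) = σ

/-- `j` is an optimal solution for `val(σ)`: feasible and minimizing `∑ val i (j i)`. -/
def IsOptimal {h : ℕ} (n : Fin h → ℕ) (val : Fin h → ℕ → ℝ) (σ : ℕ)
    (j : Fin h → ℕ) : Prop :=
  IsFeasible n σ j ∧
    ∀ j' : Fin h → ℕ, IsFeasible n σ j' → (∑ i, val i (j i)) ≤ ∑ i, val i (j' i)

lemma exists_feasible {h : ℕ} (n : Fin h → ℕ) : ∀ {σ : ℕ}, σ ≤ ∑ i, n i →
    ∃ j : Fin h → ℕ, IsFeasible n σ j := by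
  intro σ
  induction σ with
  | zero => exact fun _ => ⟨fun _ => 0, fun i => Nat.zero_le _, by simp⟩
  | succ σ ih =>
    intro hσ
    obtain ⟨j, hj1, hj2⟩ := ih (le_of_lt (Nat.lt_of_succ_le hσ))
    have hex : ∃ i, j i < n i := by
      by_contra hcon
      push_neg at hcon
      have h2 : ∑ i, n i ≤ ∑ i, j i := Finset.sum_le_sum fun i _ => hcon i
      omega
    obtain ⟨i, hi⟩ := hex
    refine ⟨Function.update j i (j i + 1), fun k => ?_, ?_⟩
    · rcases eq_or_ne k i with rfl | hk
      · simpa using hi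
      · simpa [Function.update_of_ne hk] using hj1 k
    · rw [Finset.sum_update_of_mem (Finset.mem_univ i)]
      have := Finset.add_sum_erase Finset.univ j (Finset.mem_univ i)
      have herase : Finset.univ \ {i} = Finset.univ.erase i := by
        simp [Finset.erase_eq]
      rw [herase]
      omega

lemma exists_optimal {h : ℕ} (n : Fin h → ℕ) (val : Fin h → ℕ → ℝ) {σ : ℕ}
    (hσ : σ ≤ ∑ i, n i) : ∃ j, IsOptimal n val σ j := by
  classical
  set F := (Fintype.piFinset fun i => Finset.range (n i + 1)).filter
      (fun j => ∑ i, j i = σ) with hF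
  have hmemF : ∀ j, j ∈ F ↔ IsFeasible n σ j := by
    intro j
    simp [hF, Fintype.mem_piFinset, Finset.mem_range, IsFeasible, Nat.lt_succ_iff]
  obtain ⟨j0, hj0⟩ := exists_feasible n hσ
  obtain ⟨j, hjF, hjmin⟩ := F.exists_min_image (fun j => ∑ i, val i (j i))
    ⟨j0, (hmemF j0).2 hj0⟩
  exact ⟨j, (hmemF j).1 hjF, fun k hk => hjmin k ((hmemF k).2 hk)⟩

lemma exists_chain {ι : Type*} [DecidableEq ι] (d : ι → ℤ) (θ : ℤ) :
    ∀ U : Finset ι, (∀ i ∈ U, d i ≠ 0 ∧ |d i| ≤ θ) →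
      1 - θ ≤ ∑ i ∈ U, d i → ∑ i ∈ U, d i ≤ θ →
      ∃ L : List (Finset ι), List.Chain' (fun A B => B ⊂ A) L ∧
        L.head? = some U ∧ L.length = U.card + 1 ∧
        ∀ V ∈ L, V ⊆ U ∧ 1 - θ ≤ ∑ i ∈ V, d i ∧ ∑ i ∈ V, d i ≤ θ := by
  intro U
  induction U using Finset.strongInduction with
  | _ U ih =>
    intro hd h1 h2
    rcases U.eq_empty_or_nonempty with rfl | hU
    · refine ⟨[∅], List.isChain_singleton _, by simp, by simp, ?_⟩
      intro V hV
      simp only [List.mem_singleton] at hV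
      subst hV
      exact ⟨Finset.Subset.refl _, h1, h2⟩
    · have hex : ∃ i ∈ U, (1 ≤ ∑ x ∈ U, d x → 0 < d i) ∧
          (∑ x ∈ U, d x ≤ 0 → d i < 0) := by
        rcases le_or_gt 1 (∑ x ∈ U, d x) with hpos | hneg
        · have hpos' : ∃ i ∈ U, 0 < d i := by
            by_contra hcon
            push_neg at hcon
            have := Finset.sum_nonpos hcon
            omega
          obtain ⟨i, hiU, hi⟩ := hpos'
          exact ⟨i, hiU, fun _ => hi, fun hle => by omega⟩
        · have hneg' : ∃ i ∈ U, d i < 0 := by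
            by_contra hcon
            push_neg at hcon
            have hall : ∀ i ∈ U, 0 < d i := fun i hi =>
              lt_of_le_of_ne (hcon i hi) (Ne.symm (hd i hi).1)
            have := Finset.sum_pos hall hU
            omega
          obtain ⟨i, hiU, hi⟩ := hneg'
          exact ⟨i, hiU, fun hge => by omega, fun _ => hi⟩
      obtain ⟨i, hiU, hip, hin⟩ := hex
      have hdi := hd i hiU
      have hsumerase : ∑ x ∈ U.erase i, d x = (∑ x ∈ U, d x) - d i := by
        have := Finset.add_sum_erase U d hiU
        omega
      have habs := abs_le.mp hdi.2
      have hbounds : 1 - θ ≤ ∑ x ∈ U.erase i, d x ∧ ∑ x ∈ U.erase i, d x ≤ θ := by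
        rcases le_or_gt 1 (∑ x ∈ U, d x) with hpos | hneg
        · have := hip hpos; constructor <;> omega
        · have := hin (by omega); constructor <;> omega
      obtain ⟨L, hc, hh, hl, hm⟩ := ih (U.erase i) (Finset.erase_ssubset hiU)
        (fun k hk => hd k (Finset.erase_subset _ _ hk)) hbounds.1 hbounds.2
      refine ⟨U :: L, ?_, rfl, ?_, ?_⟩
      · refine List.IsChain.cons hc ?_
        intro y hy
        rw [hh] at hy
        simp only [Option.mem_def, Option.some.injEq] at hy
        subst hy
        exact Finset.erase_ssubset hiU
      · simp only [List.length_cons, hl, Finset.card_erase_of_mem hiU]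
        have : 1 ≤ U.card := Finset.card_pos.mpr hU
        omega
      · intro V hV
        rcases List.mem_cons.mp hV with rfl | hV'
        · exact ⟨le_refl _, h1, h2⟩
        · obtain ⟨hsub, hb1, hb2⟩ := hm V hV'
          exact ⟨hsub.trans (Finset.erase_subset _ _), hb1, hb2⟩

lemma card_le_of_zsf {ι : Type*} [DecidableEq ι] (d : ι → ℤ) (θ : ℤ) (T : Finset ι)
    (hd : ∀ i ∈ T, d i ≠ 0 ∧ |d i| ≤ θ)
    (h1 : 1 - θ ≤ ∑ i ∈ T, d i) (h2 : ∑ i ∈ T, d i ≤ θ)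
    (hzs : ∀ S ⊆ T, S.Nonempty → ∑ i ∈ S, d i ≠ 0) :
    (T.card : ℤ) ≤ 2 * θ - 1 := by
  obtain ⟨L, hchain, hhead, hlen, hmem⟩ := exists_chain d θ T hd h1 h2
  haveI : IsTrans (Finset ι) (fun A B => B ⊂ A) := ⟨fun a b c hab hbc => hbc.trans hab⟩
  have hpair : L.Pairwise (fun A B => B ⊂ A) := List.isChain_iff_pairwise.mp hchain
  have hpair2 : L.Pairwise (fun A B => (∑ i ∈ A, d i) ≠ ∑ i ∈ B, d i) := by
    refine hpair.imp_of_mem ?_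
    intro A B hA hB hBA heq
    have hAT : A ⊆ T := (hmem A hA).1
    have hne : (A \ B).Nonempty := by
      rw [Finset.sdiff_nonempty]
      exact fun hsub => hBA.2 hsub
    refine hzs (A \ B) ((Finset.sdiff_subset).trans hAT) hne ?_
    have := Finset.sum_sdiff (f := d) hBA.1
    omega
  have hnodup : (L.map fun V => ∑ i ∈ V, d i).Nodup :=
    List.pairwise_map.mpr hpair2
  have hsubset : (L.map fun V => ∑ i ∈ V, d i).toFinset ⊆ Finset.Icc (1 - θ) θ := by
    intro x hx
    rw [List.mem_toFinset, List.mem_map] at hx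
    obtain ⟨V, hV, rfl⟩ := hx
    exact Finset.mem_Icc.mpr ⟨(hmem V hV).2.1, (hmem V hV).2.2⟩
  have hcard := Finset.card_le_card hsubset
  rw [List.toFinset_card_of_nodup hnodup, List.length_map, hlen, Int.card_Icc] at hcard
  omega

lemma exchange {h : ℕ} {n : Fin h → ℕ} {val : Fin h → ℕ → ℝ} {s : ℕ}
    {js j' : Fin h → ℕ} (hjs : IsOptimal n val s js)
    (hj' : IsOptimal n val (s + 1) j') (S : Finset (Fin h))
    (hS : ∑ i ∈ S, ((j' i : ℤ) - (js i : ℤ)) = 0) :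
    IsOptimal n val (s + 1) (fun i => if i ∈ S then js i else j' i) := by
  classical
  obtain ⟨⟨hjsb, hjss⟩, hjso⟩ := hjs
  obtain ⟨⟨hj'b, hj's⟩, hj'o⟩ := hj'
  set j'' : Fin h → ℕ := fun i => if i ∈ S then js i else j' i with hj''
  set js'' : Fin h → ℕ := fun i => if i ∈ S then j' i else js i with hjs''
  have hsplit : ∀ f : Fin h → ℤ,
      ∑ i, f i = ∑ i ∈ Finset.univ \ S, f i + ∑ i ∈ S, f i :=
    fun f => (Finset.sum_sdiff (Finset.subset_univ S)).symm
  have hSsum : ∑ i ∈ S, (js i : ℤ) = ∑ i ∈ S, (j' i : ℤ) := by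
    rw [Finset.sum_sub_distrib] at hS
    omega
  have hj''Z : ∑ i, (j'' i : ℤ) = ∑ i, (j' i : ℤ) := by
    rw [hsplit (fun i => (j'' i : ℤ)), hsplit (fun i => (j' i : ℤ))]
    congr 1
    · refine Finset.sum_congr rfl fun i hi => ?_
      have : i ∉ S := (Finset.mem_sdiff.mp hi).2
      simp [hj'', this]
    · rw [← hSsum]
      refine Finset.sum_congr rfl fun i hi => ?_
      simp [hj'', hi]
  have hjs''Z : ∑ i, (js'' i : ℤ) = ∑ i, (js i : ℤ) := by
    rw [hsplit (fun i => (js'' i : ℤ)), hsplit (fun i => (js i : ℤ))]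
    congr 1
    · refine Finset.sum_congr rfl fun i hi => ?_
      have : i ∉ S := (Finset.mem_sdiff.mp hi).2
      simp [hjs'', this]
    · rw [hSsum]
      refine Finset.sum_congr rfl fun i hi => ?_
      simp [hjs'', hi]
  have hc1 : ((∑ i, j'' i : ℕ) : ℤ) = ∑ i, (j'' i : ℤ) := by push_cast; rfl
  have hc2 : ((∑ i, j' i : ℕ) : ℤ) = ∑ i, (j' i : ℤ) := by push_cast; rfl
  have hc3 : ((∑ i, js'' i : ℕ) : ℤ) = ∑ i, (js'' i : ℤ) := by push_cast; rfl
  have hc4 : ((∑ i, js i : ℕ) : ℤ) = ∑ i, (js i : ℤ) := by push_cast; rfl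
  have hj''sum : ∑ i, j'' i = s + 1 := by omega
  have hjs''sum : ∑ i, js'' i = s := by omega
  have hjs''feas : IsFeasible n s js'' := by
    refine ⟨fun i => ?_, hjs''sum⟩
    by_cases hi : i ∈ S <;> simp [hjs'', hi, hj'b i, hjsb i]
  have hcost : (∑ i, val i (j'' i)) + ∑ i, val i (js'' i)
      = (∑ i, val i (j' i)) + ∑ i, val i (js i) := by
    rw [← Finset.sum_add_distrib, ← Finset.sum_add_distrib]
    refine Finset.sum_congr rfl fun i _ => ?_
    by_cases hi : i ∈ S <;> simp [hj'', hjs'', hi] <;> ring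
  refine ⟨⟨fun i => ?_, hj''sum⟩, fun k hk => ?_⟩
  · by_cases hi : i ∈ S <;> simp [hj'', hi, hj'b i, hjsb i]
  · have h1 : (∑ i, val i (js i)) ≤ ∑ i, val i (js'' i) := hjso js'' hjs''feas
    have h2 : (∑ i, val i (j' i)) ≤ ∑ i, val i (k i) := hj'o k hk
    have : (∑ i, val i (j'' i)) ≤ ∑ i, val i (j' i) := by linarith
    linarith

/-- given an optimal solution `j^s` for `val(s)`, there is an optimal
solution `j^{s+1}` for `val(s+1)` with `∑ |j^{s+1}_i - j^s_i| ≤ (θ-1)θ(θ+1) + 1`,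
where `θ = max n_i`. -/
theorem stmt6 {h : ℕ} (hh : 0 < h) (n : Fin h → ℕ) (hn : ∀ i, 0 < n i)
    (val : Fin h → ℕ → ℝ) (s : ℕ) (hs : s < ∑ i, n i)
    (js : Fin h → ℕ) (hjs : IsOptimal n val s js) :
    ∃ j' : Fin h → ℕ,
      IsOptimal n val (s + 1) j' ∧
      (∑ i, ((j' i : ℤ) - (js i : ℤ)).natAbs) ≤
        (Finset.univ.sup n - 1) * Finset.univ.sup n * (Finset.univ.sup n + 1) + 1 := by
  classical
  set θ := Finset.univ.sup n with hθdef
  have hθ1 : 1 ≤ θ := le_trans (hn ⟨0, hh⟩) (Finset.le_sup (Finset.mem_univ (⟨0, hh⟩ : Fin h)))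
  have hnθ : ∀ i, n i ≤ θ := fun i => Finset.le_sup (Finset.mem_univ i)
  set F := (Fintype.piFinset fun i => Finset.range (n i + 1)).filter
      (fun j => IsOptimal n val (s + 1) j) with hFdef
  have hFne : F.Nonempty := by
    obtain ⟨j, hj⟩ := exists_optimal n val (Nat.succ_le_of_lt hs)
    exact ⟨j, Finset.mem_filter.2 ⟨Fintype.mem_piFinset.2 fun i =>
      Finset.mem_range.2 (Nat.lt_succ_of_le (hj.1.1 i)), hj⟩⟩
  obtain ⟨j', hj'F, hj'min⟩ := F.exists_min_image
    (fun k => ∑ i, ((k i : ℤ) - (js i : ℤ)).natAbs) hFne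
  have hj' : IsOptimal n val (s + 1) j' := (Finset.mem_filter.1 hj'F).2
  refine ⟨j', hj', ?_⟩
  set d : Fin h → ℤ := fun i => (j' i : ℤ) - (js i : ℤ) with hd_def
  set T := Finset.univ.filter (fun i => d i ≠ 0) with hTdef
  have hsumd : ∑ i, d i = 1 := by
    have hc2 : ((∑ i, j' i : ℕ) : ℤ) = ∑ i, ((j' i : ℕ) : ℤ) := by push_cast; rfl
    have hc4 : ((∑ i, js i : ℕ) : ℤ) = ∑ i, ((js i : ℕ) : ℤ) := by push_cast; rfl
    have h1 := hj'.1.2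
    have h2 := hjs.1.2
    have h3 : ∑ i, d i = (∑ i, ((j' i : ℕ) : ℤ)) - ∑ i, ((js i : ℕ) : ℤ) := by
      simp only [hd_def]
      rw [Finset.sum_sub_distrib]
    omega
  have hsumT : ∑ i ∈ T, d i = 1 := by
    rw [hTdef, Finset.sum_filter_ne_zero]
    exact hsumd
  have hdT : ∀ i ∈ T, d i ≠ 0 ∧ |d i| ≤ (θ : ℤ) := by
    intro i hi
    refine ⟨(Finset.mem_filter.1 hi).2, abs_le.2 ⟨?_, ?_⟩⟩
    · have h1 := hjs.1.1 i
      have h2 := hnθ i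
      simp only [hd_def]
      omega
    · have h1 := hj'.1.1 i
      have h2 := hnθ i
      simp only [hd_def]
      omega
  have hzs : ∀ S ⊆ T, S.Nonempty → ∑ i ∈ S, d i ≠ 0 := by
    intro S hST hSne hS0
    have hopt := exchange hjs hj' S (by simpa [hd_def] using hS0)
    set j'' : Fin h → ℕ := fun i => if i ∈ S then js i else j' i with hj''def
    have hj''F : j'' ∈ F := Finset.mem_filter.2 ⟨Fintype.mem_piFinset.2 fun i =>
      Finset.mem_range.2 (Nat.lt_succ_of_le (hopt.1.1 i)), hopt⟩
    have hmin := hj'min j'' hj''F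
    have hDj' : (∑ i, ((j' i : ℤ) - (js i : ℤ)).natAbs)
        = ∑ i ∈ Finset.univ \ S, (d i).natAbs + ∑ i ∈ S, (d i).natAbs := by
      rw [← Finset.sum_sdiff (Finset.subset_univ S)]
    have hDj'' : (∑ i, ((j'' i : ℤ) - (js i : ℤ)).natAbs)
        = ∑ i ∈ Finset.univ \ S, (d i).natAbs := by
      rw [← Finset.sum_sdiff (Finset.subset_univ S)]
      have hz : ∑ i ∈ S, ((j'' i : ℤ) - (js i : ℤ)).natAbs = 0 := by
        refine Finset.sum_eq_zero fun i hi => ?_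
        simp [hj''def, hi]
      rw [hz, add_zero]
      refine Finset.sum_congr rfl fun i hi => ?_
      have hns : i ∉ S := (Finset.mem_sdiff.mp hi).2
      simp [hj''def, hd_def, hns]
    obtain ⟨i0, hi0⟩ := hSne
    have hi0T := hST hi0
    have hpos : 1 ≤ (d i0).natAbs := by
      have := (Finset.mem_filter.1 hi0T).2
      omega
    have hle : 1 ≤ ∑ i ∈ S, (d i).natAbs :=
      le_trans hpos (Finset.single_le_sum (f := fun i => (d i).natAbs)
        (fun i _ => Nat.zero_le _) hi0)
    omega
  have hcard : (T.card : ℤ) ≤ 2 * (θ : ℤ) - 1 :=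
    card_le_of_zsf d θ T hdT (by rw [hsumT]; omega)
      (by rw [hsumT]; exact_mod_cast hθ1) hzs
  have hcardn : T.card ≤ 2 * θ - 1 := by omega
  have habs : ∀ i ∈ T, (d i).natAbs ≤ θ := by
    intro i hi
    have hx := abs_le.mp (hdT i hi).2
    omega
  have hsum1 : (∑ i, ((j' i : ℤ) - (js i : ℤ)).natAbs) = ∑ i ∈ T, (d i).natAbs := by
    symm
    apply Finset.sum_subset (Finset.subset_univ T)
    intro x _ hx
    rw [hTdef, Finset.mem_filter] at hx
    push_neg at hx
    have hx0 : d x = 0 := hx (Finset.mem_univ x)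
    have hx0' : ((j' x : ℤ) - (js x : ℤ)) = 0 := hx0
    omega
  have hsum2 : ∑ i ∈ T, (d i).natAbs ≤ T.card * θ := by
    have := Finset.sum_le_card_nsmul T (fun i => (d i).natAbs) θ habs
    simpa using this
  have hfin' : ∀ m : ℕ, 1 ≤ m → (2 * m - 1) * m ≤ (m - 1) * m * (m + 1) + 1 := by
    intro m hm
    obtain ⟨k, rfl⟩ : ∃ k, m = k + 1 := ⟨m - 1, by omega⟩
    have e1 : 2 * (k + 1) - 1 = 2 * k + 1 := by omega
    have e2 : k + 1 - 1 = k := by omega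
    rw [e1, e2]
    have hk2 : k ≤ k * k := by
      cases k with
      | zero => simp
      | succ m => exact Nat.le_mul_of_pos_left _ (Nat.succ_pos m)
    nlinarith [hk2]
  have hfin : (2 * θ - 1) * θ ≤ (θ - 1) * θ * (θ + 1) + 1 := hfin' θ hθ1
  calc (∑ i, ((j' i : ℤ) - (js i : ℤ)).natAbs)
      = ∑ i ∈ T, (d i).natAbs := hsum1
    _ ≤ T.card * θ := hsum2
    _ ≤ (2 * θ - 1) * θ := Nat.mul_le_mul_right θ hcardn
    _ ≤ (θ - 1) * θ * (θ + 1) + 1 := hfin
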